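/- Let G be a second countable locally compact Hausdorff topological group with a right Haar measure ϑ, let 1 ≤ p < ∞, let g ∈ G, let β > 1 be a scalar, and let w be a weight on G such that 1/w is also bounded. If liminf_{k→∞} ‖β^{k} (∏_{i=0}^{k−1} (w ∗ δ_{g^{i}}))^{−1}‖_∞ = 0, then the operator βI − T_{g,w} on L^p(G, ϑ) is injective, i.e. the only f ∈ L^p(G, ϑ) with T_{g,w} f = β f is f = 0. -/

import Mathlib

open MeasureTheory Filter
open scoped ENNReal

/-- Let `β > 1` and `w` a weight with `1/w` bounded. If
`liminf_k ‖β^k (∏_{i=0}^{k-1} (w ∗ δ_{g^i}))⁻¹‖_∞ = 0`, then `βI - T_{g,w}` is injective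
on `L^p(G,ϑ)`: the only `f` with `T_{g,w} f = β f` is `f = 0`. -/
theorem stmt_8
    {G : Type*} [Group G] [TopologicalSpace G] [IsTopologicalGroup G] [T2Space G]
    [LocallyCompactSpace G] [SecondCountableTopology G]
    [MeasurableSpace G] [BorelSpace G]
    (ϑ : Measure G) [ϑ.IsMulRightInvariant] [ϑ.Regular] [ϑ.IsOpenPosMeasure]
    (p : ℝ≥0∞) [Fact (1 ≤ p)] (hp : p ≠ ∞)
    (g : G) (β : ℝ) (hβ : 1 < β)
    (w : G → ℝ) (hw_meas : Measurable w) (hw_pos : ∀ x, 0 < w x)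
    (hw_bdd : ∃ C : ℝ, ∀ x, w x ≤ C)
    (hw_inv_bdd : ∃ C : ℝ, ∀ x, (w x)⁻¹ ≤ C)
    (T : Lp ℂ p ϑ →L[ℂ] Lp ℂ p ϑ)
    (hT : ∀ f : Lp ℂ p ϑ, (T f : G → ℂ) =ᵐ[ϑ] fun x => (w x : ℂ) * f (x * g⁻¹))
    (h2 : Filter.liminf (fun k : ℕ =>
      eLpNorm (fun x : G => β ^ (k : ℤ) * (∏ i ∈ Finset.range k, w (x * (g ^ i)⁻¹))⁻¹) ∞ ϑ)
      Filter.atTop = 0) :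
    ∀ f : Lp ℂ p ϑ, T f = (β : ℂ) • f → f = 0 := by
  intro f hf
  set F : G → ℂ := ⇑f with hFdef
  have hF : AEStronglyMeasurable F ϑ := Lp.aestronglyMeasurable f
  -- basic eigen-relation
  have e1 : ∀ᵐ x ∂ϑ, (w x : ℂ) * F (x * g⁻¹) = (β : ℂ) * F x := by
    have h2' : (T f : G → ℂ) =ᵐ[ϑ] fun x => (β : ℂ) * F x := by
      rw [hf]
      filter_upwards [Lp.coeFn_smul (β : ℂ) f] with x hx
      simpa [F] using hx
    filter_upwards [(hT f).symm.trans h2'] with x hx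
    exact hx
  -- iterated relation
  have key : ∀ k : ℕ, ∀ᵐ x ∂ϑ,
      ((∏ i ∈ Finset.range k, w (x * (g ^ i)⁻¹) : ℝ) : ℂ) * F (x * (g ^ k)⁻¹)
        = ((β ^ k : ℝ) : ℂ) * F x := by
    intro k
    induction k with
    | zero => filter_upwards with x; simp
    | succ k IH =>
      have IH' : ∀ᵐ x ∂ϑ,
          ((∏ i ∈ Finset.range k, w (x * g⁻¹ * (g ^ i)⁻¹) : ℝ) : ℂ)
              * F (x * g⁻¹ * (g ^ k)⁻¹)
            = ((β ^ k : ℝ) : ℂ) * F (x * g⁻¹) :=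
        ((measurePreserving_mul_right ϑ g⁻¹).quasiMeasurePreserving.tendsto_ae).eventually IH
      filter_upwards [IH', e1] with x hIH hx
      have hxg : ∀ i : ℕ, x * g⁻¹ * (g ^ i)⁻¹ = x * (g ^ (i + 1))⁻¹ := by
        intro i; simp [pow_succ, mul_inv_rev, mul_assoc]
      have h0 : ((∏ i ∈ Finset.range (k + 1), w (x * (g ^ i)⁻¹) : ℝ) : ℂ)
          = ((∏ i ∈ Finset.range k, w (x * g⁻¹ * (g ^ i)⁻¹) : ℝ) : ℂ) * (w x : ℂ) := by
        rw [Finset.prod_range_succ']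
        push_cast
        simp [hxg]
      rw [h0, ← hxg k]
      calc ((∏ i ∈ Finset.range k, w (x * g⁻¹ * (g ^ i)⁻¹) : ℝ) : ℂ) * (w x : ℂ)
            * F (x * g⁻¹ * (g ^ k)⁻¹)
          = (w x : ℂ) * (((∏ i ∈ Finset.range k, w (x * g⁻¹ * (g ^ i)⁻¹) : ℝ) : ℂ)
              * F (x * g⁻¹ * (g ^ k)⁻¹)) := by ring
        _ = (w x : ℂ) * (((β ^ k : ℝ) : ℂ) * F (x * g⁻¹)) := by rw [hIH]
        _ = ((β ^ k : ℝ) : ℂ) * ((w x : ℂ) * F (x * g⁻¹)) := by ring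
        _ = ((β ^ k : ℝ) : ℂ) * ((β : ℂ) * F x) := by rw [hx]
        _ = ((β ^ (k + 1) : ℝ) : ℂ) * F x := by push_cast; ring
  -- norm bound for each k
  have hbound : ∀ k : ℕ, eLpNorm F p ϑ ≤
      eLpNorm (fun x : G => β ^ (k : ℤ) * (∏ i ∈ Finset.range k, w (x * (g ^ i)⁻¹))⁻¹) ∞ ϑ
        * eLpNorm F p ϑ := by
    intro k
    set φ : G → ℝ := fun x : G => β ^ (k : ℤ) * (∏ i ∈ Finset.range k, w (x * (g ^ i)⁻¹))⁻¹
      with hφdef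
    have hae : (fun x => F (x * (g ^ k)⁻¹)) =ᵐ[ϑ] φ • F := by
      filter_upwards [key k] with x hx
      have hP : (0 : ℝ) < ∏ i ∈ Finset.range k, w (x * (g ^ i)⁻¹) :=
        Finset.prod_pos fun i _ => hw_pos _
      have hPne : ((∏ i ∈ Finset.range k, w (x * (g ^ i)⁻¹) : ℝ) : ℂ) ≠ 0 := by
        exact_mod_cast hP.ne'
      have hFy : F (x * (g ^ k)⁻¹)
          = ((∏ i ∈ Finset.range k, w (x * (g ^ i)⁻¹) : ℝ) : ℂ)⁻¹
              * (((β ^ k : ℝ) : ℂ) * F x) := by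
        rw [← hx, ← mul_assoc, inv_mul_cancel₀ hPne, one_mul]
      show F (x * (g ^ k)⁻¹) = φ x • F x
      rw [hFy, hφdef]
      simp only [Complex.real_smul]
      push_cast [zpow_natCast]
      ring
    have hcomp : eLpNorm (fun x => F (x * (g ^ k)⁻¹)) p ϑ = eLpNorm F p ϑ :=
      eLpNorm_comp_measurePreserving hF (measurePreserving_mul_right ϑ (g ^ k)⁻¹)
    calc eLpNorm F p ϑ = eLpNorm (fun x => F (x * (g ^ k)⁻¹)) p ϑ := hcomp.symm
      _ = eLpNorm (φ • F) p ϑ := eLpNorm_congr_ae hae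
      _ ≤ eLpNorm φ ∞ ϑ * eLpNorm F p ϑ :=
          eLpNorm_smul_le_eLpNorm_top_mul_eLpNorm p hF φ
  -- conclude using liminf = 0
  have hfreq : ∃ᶠ k : ℕ in atTop,
      eLpNorm (fun x : G => β ^ (k : ℤ) * (∏ i ∈ Finset.range k, w (x * (g ^ i)⁻¹))⁻¹) ∞ ϑ
        < 1 / 2 := by
    refine frequently_lt_of_liminf_lt (by isBoundedDefault) ?_
    rw [h2]
    norm_num
  obtain ⟨k, hk⟩ := hfreq.exists
  have hN : eLpNorm F p ϑ ≤ 1 / 2 * eLpNorm F p ϑ :=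
    le_trans (hbound k) (mul_le_mul_left hk.le _)
  have hfin : eLpNorm F p ϑ ≠ ∞ := (Lp.eLpNorm_lt_top f).ne
  have hzero : eLpNorm F p ϑ = 0 := by
    by_contra h0
    have hlt : eLpNorm F p ϑ / 2 < eLpNorm F p ϑ := ENNReal.half_lt_self h0 hfin
    have : eLpNorm F p ϑ ≤ eLpNorm F p ϑ / 2 := by
      rw [ENNReal.div_eq_inv_mul]
      simpa [one_div] using hN
    exact absurd this hlt.not_ge
  have hnorm : ‖f‖ = 0 := by
    rw [Lp.norm_def, ← hFdef, hzero]
    simp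
  exact norm_eq_zero.mp hnorm
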